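/- Let ℓ ≥ 1 be a natural number and let c = (ℓ+1, ℓ+1, ℓ+1) be the centre point of the lattice cube L_ℓ. For every point j ∈ L_ℓ, the product of the Euclidean distances from the centre to all other lattice points is less than or equal to the product of the Euclidean distances from j to all other lattice points: ∏_{x ∈ L_ℓ, x ≠ c} |c − x| ≤ ∏_{x ∈ L_ℓ, x ≠ j} |j − x|. -/

import Mathlib

open Finset

/-- The point of `ℝ³` (with the Euclidean metric) corresponding to an integer triple. -/
noncomputable def pt (i : ℤ × ℤ × ℤ) : EuclideanSpace ℝ (Fin 3) :=
  (WithLp.equiv 2 (Fin 3 → ℝ)).symm ![(i.1 : ℝ), (i.2.1 : ℝ), (i.2.2 : ℝ)]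

/-- The lattice cube `L_ℓ`: integer triples `(i₁,i₂,i₃)` with `1 ≤ i₁,i₂,i₃ ≤ 2ℓ+1`. -/
noncomputable def latticeCube (ℓ : ℕ) : Finset (ℤ × ℤ × ℤ) :=
  Finset.Icc 1 (2 * (ℓ : ℤ) + 1) ×ˢ Finset.Icc 1 (2 * (ℓ : ℤ) + 1) ×ˢ
    Finset.Icc 1 (2 * (ℓ : ℤ) + 1)

lemma dist_pt (a b : ℤ × ℤ × ℤ) : dist (pt a) (pt b) =
    Real.sqrt (((a.1:ℝ) - b.1)^2 + (((a.2.1:ℝ) - b.2.1)^2 + ((a.2.2:ℝ) - b.2.2)^2)) := by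
  simp [pt, EuclideanSpace.dist_eq, Fin.sum_univ_three, Real.dist_eq, sq_abs, add_assoc]

lemma coord_sq (ℓ y jc : ℤ) (hy1 : 1 ≤ y) (hy2 : y ≤ 2*ℓ+1)
    (hj1 : 1 ≤ jc) (hj2 : jc ≤ 2*ℓ+1) :
    (y - (ℓ+1))^2 ≤ ((y + jc - ℓ - 2) % (2*ℓ+1) + 1 - jc)^2 := by
  have hn : (0:ℤ) < 2*ℓ+1 := by omega
  set a := y + jc - ℓ - 2 with ha
  have h1 : 0 ≤ a % (2*ℓ+1) := Int.emod_nonneg _ hn.ne'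
  have h2 : a % (2*ℓ+1) < 2*ℓ+1 := Int.emod_lt_of_pos _ hn
  have h3 := Int.mul_ediv_add_emod a (2*ℓ+1)
  set k := a / (2*ℓ+1) with hk
  set r := a % (2*ℓ+1) with hr
  have hk1 : k ≤ 1 := by nlinarith
  have hk2 : -1 ≤ k := by nlinarith
  interval_cases k <;> nlinarith

lemma comp_left (ℓ y jc : ℤ) (hy1 : 1 ≤ y) (hy2 : y ≤ 2*ℓ+1) :
    ((y + jc - ℓ - 2) % (2*ℓ+1) + 1 - jc + ℓ) % (2*ℓ+1) + 1 = y := by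
  have : ((y + jc - ℓ - 2) % (2*ℓ+1) + 1 - jc + ℓ) % (2*ℓ+1)
      = (y + jc - ℓ - 2 + (1 - jc + ℓ)) % (2*ℓ+1) := by
    rw [show (y + jc - ℓ - 2) % (2*ℓ+1) + 1 - jc + ℓ
        = (y + jc - ℓ - 2) % (2*ℓ+1) + (1 - jc + ℓ) by ring, Int.emod_add_emod]
  rw [this, show y + jc - ℓ - 2 + (1 - jc + ℓ) = y - 1 by ring,
    Int.emod_eq_of_lt (by omega) (by omega)]
  ring

lemma comp_right (ℓ x jc : ℤ) (hx1 : 1 ≤ x) (hx2 : x ≤ 2*ℓ+1) :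
    ((x - jc + ℓ) % (2*ℓ+1) + 1 + jc - ℓ - 2) % (2*ℓ+1) + 1 = x := by
  have : ((x - jc + ℓ) % (2*ℓ+1) + 1 + jc - ℓ - 2) % (2*ℓ+1)
      = (x - jc + ℓ + (1 + jc - ℓ - 2)) % (2*ℓ+1) := by
    rw [show (x - jc + ℓ) % (2*ℓ+1) + 1 + jc - ℓ - 2
        = (x - jc + ℓ) % (2*ℓ+1) + (1 + jc - ℓ - 2) by ring, Int.emod_add_emod]
  rw [this, show x - jc + ℓ + (1 + jc - ℓ - 2) = x - 1 by ring,
    Int.emod_eq_of_lt (by omega) (by omega)]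
  ring


lemma psi_c (ℓ jc : ℤ) (h1 : 1 ≤ jc) (h2 : jc ≤ 2*ℓ+1) :
    (ℓ + 1 + jc - ℓ - 2) % (2*ℓ+1) + 1 = jc := by
  rw [show ℓ + 1 + jc - ℓ - 2 = jc - 1 by ring, Int.emod_eq_of_lt (by omega) (by omega)]
  ring

theorem centre_minimizes_distance_product (ℓ : ℕ) (hℓ : 1 ≤ ℓ)
    (c : ℤ × ℤ × ℤ) (hc : c = ((ℓ : ℤ) + 1, (ℓ : ℤ) + 1, (ℓ : ℤ) + 1))
    (j : ℤ × ℤ × ℤ) (hj : j ∈ latticeCube ℓ) :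
    ∏ x ∈ (latticeCube ℓ).erase c, dist (pt c) (pt x) ≤
      ∏ x ∈ (latticeCube ℓ).erase j, dist (pt j) (pt x) := by
  set n : ℤ := 2 * (ℓ : ℤ) + 1 with hn
  have hn0 : (0:ℤ) < n := by positivity
  have memL : ∀ z : ℤ × ℤ × ℤ, z ∈ latticeCube ℓ ↔
      (1 ≤ z.1 ∧ z.1 ≤ n) ∧ (1 ≤ z.2.1 ∧ z.2.1 ≤ n) ∧ (1 ≤ z.2.2 ∧ z.2.2 ≤ n) := by
    intro z
    simp [latticeCube, Finset.mem_Icc, hn, and_assoc]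
  rw [memL] at hj
  obtain ⟨⟨hj11, hj12⟩, ⟨hj21, hj22⟩, hj31, hj32⟩ := hj
  set Ψ : ℤ × ℤ × ℤ → ℤ × ℤ × ℤ := fun y =>
    ((y.1 + j.1 - ℓ - 2) % n + 1, (y.2.1 + j.2.1 - ℓ - 2) % n + 1,
     (y.2.2 + j.2.2 - ℓ - 2) % n + 1) with hΨ
  set Ψ' : ℤ × ℤ × ℤ → ℤ × ℤ × ℤ := fun x =>
    ((x.1 - j.1 + ℓ) % n + 1, (x.2.1 - j.2.1 + ℓ) % n + 1,
     (x.2.2 - j.2.2 + ℓ) % n + 1) with hΨ'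
  have hcL : c ∈ latticeCube ℓ := by rw [memL, hc]; constructor <;> simp <;> omega
  have hΨmem : ∀ z : ℤ × ℤ × ℤ, Ψ z ∈ latticeCube ℓ := by
    intro z
    have a1 := Int.emod_nonneg (z.1 + j.1 - ℓ - 2) hn0.ne'
    have b1 := Int.emod_lt_of_pos (z.1 + j.1 - ℓ - 2) hn0
    have a2 := Int.emod_nonneg (z.2.1 + j.2.1 - ℓ - 2) hn0.ne'
    have b2 := Int.emod_lt_of_pos (z.2.1 + j.2.1 - ℓ - 2) hn0
    have a3 := Int.emod_nonneg (z.2.2 + j.2.2 - ℓ - 2) hn0.ne'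
    have b3 := Int.emod_lt_of_pos (z.2.2 + j.2.2 - ℓ - 2) hn0
    rw [memL]
    simp only [hΨ]
    omega
  have hΨ'mem : ∀ z : ℤ × ℤ × ℤ, Ψ' z ∈ latticeCube ℓ := by
    intro z
    have a1 := Int.emod_nonneg (z.1 - j.1 + ℓ) hn0.ne'
    have b1 := Int.emod_lt_of_pos (z.1 - j.1 + ℓ) hn0
    have a2 := Int.emod_nonneg (z.2.1 - j.2.1 + ℓ) hn0.ne'
    have b2 := Int.emod_lt_of_pos (z.2.1 - j.2.1 + ℓ) hn0
    have a3 := Int.emod_nonneg (z.2.2 - j.2.2 + ℓ) hn0.ne'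
    have b3 := Int.emod_lt_of_pos (z.2.2 - j.2.2 + ℓ) hn0
    rw [memL]
    simp only [hΨ']
    omega
  have hleft : ∀ z ∈ latticeCube ℓ, Ψ' (Ψ z) = z := by
    intro z hz
    rw [memL] at hz
    obtain ⟨⟨h1, h2⟩, ⟨h3, h4⟩, h5, h6⟩ := hz
    simp only [hΨ, hΨ', hn] at *
    exact Prod.ext (comp_left ℓ z.1 j.1 h1 h2)
      (Prod.ext (comp_left ℓ z.2.1 j.2.1 h3 h4) (comp_left ℓ z.2.2 j.2.2 h5 h6))
  have hright : ∀ z ∈ latticeCube ℓ, Ψ (Ψ' z) = z := by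
    intro z hz
    rw [memL] at hz
    obtain ⟨⟨h1, h2⟩, ⟨h3, h4⟩, h5, h6⟩ := hz
    simp only [hΨ, hΨ', hn] at *
    exact Prod.ext (comp_right ℓ z.1 j.1 h1 h2)
      (Prod.ext (comp_right ℓ z.2.1 j.2.1 h3 h4) (comp_right ℓ z.2.2 j.2.2 h5 h6))
  have hΨc : Ψ c = j := by
    simp only [hΨ, hc, hn]
    exact Prod.ext (psi_c ℓ j.1 hj11 hj12)
      (Prod.ext (psi_c ℓ j.2.1 hj21 hj22) (psi_c ℓ j.2.2 hj31 hj32))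
  have key : ∏ x ∈ (latticeCube ℓ).erase j, dist (pt j) (pt x)
      = ∏ y ∈ (latticeCube ℓ).erase c, dist (pt j) (pt (Ψ y)) := by
    refine (Finset.prod_nbij' Ψ Ψ' ?_ ?_ ?_ ?_ ?_).symm
    · intro a ha
      rw [Finset.mem_erase] at ha ⊢
      refine ⟨fun h => ha.1 ?_, hΨmem a⟩
      have := hleft a ha.2
      rw [h] at this
      rw [← this, ← hΨc, hleft c hcL]
    · intro a ha
      rw [Finset.mem_erase] at ha ⊢
      refine ⟨fun h => ha.1 ?_, hΨ'mem a⟩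
      rw [← hright a ha.2, h, hΨc]
    · intro a ha; exact hleft a (Finset.mem_erase.mp ha).2
    · intro a ha; exact hright a (Finset.mem_erase.mp ha).2
    · intro a ha; rfl
  rw [key]
  refine Finset.prod_le_prod (fun x _ => dist_nonneg) ?_
  intro x hx
  rw [Finset.mem_erase, memL] at hx
  obtain ⟨hne, ⟨h1, h2⟩, ⟨h3, h4⟩, h5, h6⟩ := hx
  rw [dist_pt, dist_pt]
  apply Real.sqrt_le_sqrt
  have e1 := coord_sq ℓ x.1 j.1 h1 (by omega) hj11 (by omega)
  have e2 := coord_sq ℓ x.2.1 j.2.1 h3 (by omega) hj21 (by omega)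
  have e3 := coord_sq ℓ x.2.2 j.2.2 h5 (by omega) hj31 (by omega)
  simp only [hΨ, hc, hn]
  have hZ : (((ℓ:ℤ)+1) - x.1)^2 + ((((ℓ:ℤ)+1) - x.2.1)^2 + (((ℓ:ℤ)+1) - x.2.2)^2)
      ≤ (j.1 - ((x.1 + j.1 - (ℓ:ℤ) - 2) % (2*(ℓ:ℤ)+1) + 1))^2
        + ((j.2.1 - ((x.2.1 + j.2.1 - (ℓ:ℤ) - 2) % (2*(ℓ:ℤ)+1) + 1))^2
          + (j.2.2 - ((x.2.2 + j.2.2 - (ℓ:ℤ) - 2) % (2*(ℓ:ℤ)+1) + 1))^2) := by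
    nlinarith [e1, e2, e3, sq_nonneg ((ℓ:ℤ)+1-x.1)]
  exact_mod_cast hZ
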